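/- Let T be a linear operator on a vector space X with no non-trivial finite dimensional invariant subspaces, and let L be a finite dimensional subspace of X. Then there exists n₀ ∈ ℕ such that for every polynomial p with deg p ≥ n₀, p(T)(L) ∩ L = {0}. -/

import Mathlib

open Polynomial

theorem aux_torsionfree (k : Type*) [Field k] (X : Type*) [AddCommGroup X] [Module k X]
    (T : Module.End k X)
    (hT : ¬ ∃ E : Submodule k X, E ≠ ⊥ ∧ FiniteDimensional k E ∧ ∀ x ∈ E, T x ∈ E)
    (p : Polynomial k) (x : X) (h : Polynomial.aeval T p x = 0) : p = 0 ∨ x = 0 := by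
  by_contra hc
  push_neg at hc
  obtain ⟨hp, hx⟩ := hc
  set d := p.natDegree with hd
  rcases Nat.eq_zero_or_pos d with h0 | hdpos
  · obtain ⟨a, ha⟩ := Polynomial.natDegree_eq_zero.mp h0
    have : a ≠ 0 := by rintro rfl; simp at ha; exact hp ha.symm
    rw [← ha] at h
    simp [Module.algebraMap_end_apply] at h
    rcases h with h | h
    · exact this h
    · exact hx h
  · set E := Submodule.span k (Set.range fun i : Fin d => (T ^ (i : ℕ)) x) with hE
    apply hT
    refine ⟨E, ?_, ?_, ?_⟩
    · have hxE : x ∈ E := by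
        apply Submodule.subset_span
        exact ⟨⟨0, hdpos⟩, by simp⟩
      exact fun hbot => hx (by simpa [hbot] using hxE)
    · exact FiniteDimensional.span_of_finite k (Set.finite_range _)
    · -- invariance
      have hTd : (T ^ d) x ∈ E := by
        have hsum : ∑ i ∈ Finset.range (d + 1), p.coeff i • (T ^ i) x = 0 := by
          have h2 := Polynomial.aeval_eq_sum_range (p := p) T
          calc ∑ i ∈ Finset.range (d + 1), p.coeff i • (T ^ i) x
              = (∑ i ∈ Finset.range (d + 1), p.coeff i • T ^ i) x := by
                simp [LinearMap.sum_apply]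
            _ = 0 := by rw [← h2]; exact h
        rw [Finset.sum_range_succ] at hsum
        have hlc : p.coeff d ≠ 0 := Polynomial.leadingCoeff_ne_zero.mpr hp
        have heq : (T ^ d) x
            = (p.coeff d)⁻¹ • (- ∑ i ∈ Finset.range d, p.coeff i • (T ^ i) x) := by
          rw [eq_inv_smul_iff₀ hlc]
          exact eq_neg_of_add_eq_zero_right hsum
        rw [heq]
        refine E.smul_mem _ (E.neg_mem (Submodule.sum_mem _ fun i hi => E.smul_mem _ ?_))
        exact Submodule.subset_span ⟨⟨i, Finset.mem_range.mp hi⟩, rfl⟩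
      intro y hy
      induction hy using Submodule.span_induction with
      | mem z hz =>
        obtain ⟨i, rfl⟩ := hz
        rcases Nat.lt_or_ge ((i : ℕ) + 1) d with hlt | hge
        · apply Submodule.subset_span
          exact ⟨⟨(i : ℕ) + 1, hlt⟩, by simp [pow_succ', Module.End.mul_apply]⟩
        · have hid : (i : ℕ) + 1 = d := by omega
          rw [show T ((T ^ (i : ℕ)) x) = (T ^ ((i:ℕ)+1)) x by
            simp [pow_succ', Module.End.mul_apply], hid]
          exact hTd
      | zero => simp
      | add a b _ _ ha hb => rw [map_add]; exact E.add_mem ha hb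
      | smul c a _ ha => rw [map_smul]; exact E.smul_mem c ha


theorem aux_bound (k : Type*) [Field k] (X Y : Type*) [AddCommGroup X] [Module k X]
    [AddCommGroup Y] [Module k Y] [Module k[X] Y] [IsScalarTower k k[X] Y]
    (f : X →ₗ[k] Y) (M : Submodule k[X] Y) (ι : Type*)
    (b : Module.Basis ι k[X] M) (s : Finset X)
    (hmem : ∀ y ∈ Submodule.span k (s : Set X), f y ∈ M) :
    ∃ N : ℕ, ∀ y (hy : y ∈ Submodule.span k (s : Set X)) (i : ι),
      ((b.repr ⟨f y, hmem y hy⟩) i).natDegree ≤ N := by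
  classical
  refine ⟨s.attach.sup (fun x =>
    ((b.repr ⟨f x.1, hmem x.1 (Submodule.subset_span x.2)⟩).support.sup
      (fun i => ((b.repr ⟨f x.1, hmem x.1 (Submodule.subset_span x.2)⟩) i).natDegree))), ?_⟩
  intro y hy
  induction hy using Submodule.span_induction with
  | mem z hz =>
    intro i
    have hm : f z ∈ M := hmem z (Submodule.subset_span hz)
    by_cases hsupp : i ∈ (b.repr ⟨f z, hm⟩).support
    · have h1 := Finset.le_sup (f := fun j => ((b.repr ⟨f z, hm⟩) j).natDegree) hsupp
      have h2 := Finset.le_sup (f := fun x : {x // x ∈ s} =>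
          ((b.repr ⟨f x.1, hmem x.1 (Submodule.subset_span x.2)⟩).support.sup
            (fun i => ((b.repr ⟨f x.1, hmem x.1 (Submodule.subset_span x.2)⟩) i).natDegree)))
        (Finset.mem_attach s ⟨z, hz⟩)
      beta_reduce at h2
      exact le_trans h1 h2
    · rw [Finsupp.notMem_support_iff.mp hsupp]; simp
  | zero =>
    intro i
    have hm : f 0 ∈ M := hmem 0 (Submodule.zero_mem _)
    have h0 : (⟨f 0, hm⟩ : M) = 0 := Subtype.ext (map_zero _)
    rw [h0]; simp
  | add z w hz hw ihz ihw =>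
    intro i
    have hm : f (z + w) ∈ M := hmem _ (Submodule.add_mem _ hz hw)
    have hzm : f z ∈ M := hmem z hz
    have hwm : f w ∈ M := hmem w hw
    have hadd : (⟨f (z + w), hm⟩ : M) = ⟨f z, hzm⟩ + ⟨f w, hwm⟩ :=
      Subtype.ext (map_add _ _ _)
    rw [hadd, map_add, Finsupp.add_apply]
    exact le_trans (Polynomial.natDegree_add_le _ _) (max_le (ihz i) (ihw i))
  | smul c z hz ihz =>
    intro i
    have hm : f (c • z) ∈ M := hmem _ (Submodule.smul_mem _ _ hz)
    have hzm : f z ∈ M := hmem z hz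
    have hsm : (⟨f (c • z), hm⟩ : M) = (Polynomial.C c) • ⟨f z, hzm⟩ := by
      apply Subtype.ext
      show f (c • z) = (Polynomial.C c : k[X]) • (f z)
      rw [map_smul, Polynomial.C_eq_algebraMap, algebraMap_smul]
    rw [hsm, map_smul, Finsupp.smul_apply, smul_eq_mul]
    exact le_trans (Polynomial.natDegree_C_mul_le _ _) (ihz i)

theorem stmt_6 (k : Type*) [Field k] (X : Type*) [AddCommGroup X] [Module k X]
    (T : Module.End k X)
    (hT : ¬ ∃ E : Submodule k X, E ≠ ⊥ ∧ FiniteDimensional k E ∧ ∀ x ∈ E, T x ∈ E)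
    (L : Submodule k X) (hL : FiniteDimensional k L) :
    ∃ n₀ : ℕ, ∀ p : Polynomial k, n₀ ≤ p.natDegree →
      Submodule.map (Polynomial.aeval T p) L ⊓ L = ⊥ := by
  classical
  have htf : ∀ (p : Polynomial k) (x : X), Polynomial.aeval T p x = 0 → p = 0 ∨ x = 0 :=
    aux_torsionfree k X T hT
  haveI : NoZeroSMulDivisors k[X] (Module.AEval' T) := by
    constructor
    intro p m hpm
    have h0 : Polynomial.aeval T p ((Module.AEval'.of T).symm m) = 0 := by
      have := congrArg (Module.AEval'.of T).symm hpm
      simpa [Module.AEval.of_symm_smul, Module.End.smul_def] using this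
    rcases htf p ((Module.AEval'.of T).symm m) h0 with h | h
    · exact Or.inl h
    · exact Or.inr ((Module.AEval'.of T).symm.injective (by simpa using h))
  obtain ⟨s, hs⟩ : L.FG := (Module.Finite.iff_fg (N := L)).mp inferInstance
  set f : X →ₗ[k] Module.AEval' T := (Module.AEval'.of T : X ≃ₗ[k] Module.AEval' T).toLinearMap
    with hf
  set M : Submodule k[X] (Module.AEval' T) := Submodule.span k[X] (f '' (L : Set X)) with hM
  have hmemM : ∀ y ∈ L, f y ∈ M := fun y hy => Submodule.subset_span ⟨y, hy, rfl⟩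
  have hMfg : M.FG := by
    refine Submodule.fg_def.mpr ⟨f '' ↑s, Set.Finite.image _ s.finite_toSet, le_antisymm ?_ ?_⟩
    · apply Submodule.span_mono
      rintro z ⟨x, hx, rfl⟩
      exact ⟨x, hs ▸ Submodule.subset_span hx, rfl⟩
    · rw [Submodule.span_le]
      rintro z ⟨y, hy, rfl⟩
      rw [← hs] at hy
      have h1 : f y ∈ Submodule.span k (f '' s) := by
        rw [← Submodule.map_span]
        exact Submodule.mem_map_of_mem hy
      have h2 : Submodule.span k (f '' s)
          ≤ (Submodule.span k[X] (f '' s)).restrictScalars k :=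
        Submodule.span_le_restrictScalars k k[X] _
      have := h2 h1
      rw [Submodule.restrictScalars_mem] at this
      exact this
  haveI : Module.Finite k[X] M := (Module.Finite.iff_fg (N := M)).mpr hMfg
  haveI : Module.Free k[X] M := Module.free_of_finite_type_torsion_free'
  have b : Module.Basis (Module.Free.ChooseBasisIndex k[X] M) k[X] M :=
    Module.Free.chooseBasis k[X] M
  have hmem' : ∀ y ∈ Submodule.span k (s : Set X), f y ∈ M := fun y hy => hmemM y (hs ▸ hy)
  obtain ⟨N, hNb⟩ := aux_bound k X (Module.AEval' T) f M _ b s hmem'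
  refine ⟨N + 1, fun p hp => ?_⟩
  rw [Submodule.eq_bot_iff]
  rintro y ⟨hymap, hyL⟩
  obtain ⟨u, huL, rfl⟩ := Submodule.mem_map.mp hymap
  by_cases hu : u = 0
  · simp [hu]
  · exfalso
    have hp0 : p ≠ 0 := fun h => by simp [h] at hp
    have huS : u ∈ Submodule.span k (s : Set X) := hs.symm ▸ huL
    have hyS : Polynomial.aeval T p u ∈ Submodule.span k (s : Set X) := hs.symm ▸ hyL
    set mu : M := ⟨f u, hmem' u huS⟩ with hmu
    have hmu0 : mu ≠ 0 := by
      intro h0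
      apply hu
      have := congrArg Subtype.val h0
      simp only [hmu] at this
      apply (Module.AEval'.of T).injective
      simpa [hf] using this
    have hrepr0 : b.repr mu ≠ 0 := fun h => hmu0 (b.repr.map_eq_zero_iff.mp h)
    obtain ⟨i, hi⟩ := Finsupp.ne_iff.mp hrepr0
    rw [Finsupp.coe_zero, Pi.zero_apply] at hi
    have hkey : (⟨f (Polynomial.aeval T p u), hmem' _ hyS⟩ : M) = p • mu := by
      apply Subtype.ext
      rw [Submodule.coe_smul]
      show f (Polynomial.aeval T p u) = p • (f u)
      simp only [hf, LinearEquiv.coe_toLinearMap]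
      rw [← Module.AEval.of_aeval_smul]
      rfl
    have h1 := hNb _ hyS i
    rw [hkey, map_smul, Finsupp.smul_apply, smul_eq_mul] at h1
    rw [Polynomial.natDegree_mul hp0 hi] at h1
    omega
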